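/- For the Toeplitz array η constructed in Section 4 (with the series L = 1/|D_1| + ∑_j |D_j|/|D_{j+1}| convergent and 1 - e^{-2L} < 1/4), the density d = lim_n |D_n ∩ Per(η,Γ_n)|/|D_n| satisfies d ≤ 1 - e^{-2L} < 1/4, and in particular d < 1 - d and η is irregular (d < 1). -/

import Mathlib

open Pointwise Filter Topology

/-- `Per(η, Γ, α)`: positions `g` such that `η` equals `α` on the whole coset `Γ g`. -/
def PerA {G A : Type*} [Group G] (η : G → A) (Γ : Subgroup G) (α : A) : Set G :=
  {g | ∀ γ ∈ Γ, η (γ * g) = α}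

/-- `Per(η, Γ) = ⋃_α Per(η, Γ, α)`: positions at which `η` is `Γ`-periodic. -/
def Per {G A : Type*} [Group G] (η : G → A) (Γ : Subgroup G) : Set G :=
  ⋃ α, PerA η Γ α

/-- For the Toeplitz array `η` of Section 4, with
`L = 1/|D 1| + ∑_{j≥1} |D j|/|D (j+1)|` convergent and `1 - exp (-2L) < 1/4`, the density
`d = lim |D n ∩ Per(η,Γ n)|/|D n|` satisfies `d ≤ 1 - exp (-2L) < 1/4`; in particular
`d < 1 - d` and `η` is irregular (`d < 1`). -/
theorem irregular_density_bound {G : Type*} [Group G]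
    (Γ : ℕ → Subgroup G)
    (hnorm : ∀ n, (Γ n).Normal)
    (hfin : ∀ n, (Γ n).FiniteIndex)
    (hdec : ∀ n, Γ (n + 1) ≤ Γ n)
    (D : ℕ → Finset G)
    (hD0 : D 0 = {1})
    (hDone : ∀ n, (1 : G) ∈ D n)
    (hDmono : ∀ n, D n ⊆ D (n + 1))
    (hfund : ∀ n, ∀ g : G, ∃! d, d ∈ D n ∧ g⁻¹ * d ∈ Γ n)
    (hcompat : ∀ i j, i < j →
      (D j : Set G) = ⋃ v ∈ (D j : Set G) ∩ (Γ i : Set G), v • (D i : Set G))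
    (J : ℕ → Set G)
    (hJ : ∀ n, J n = (D n : Set G) \ ⋃ i ∈ Finset.range n, J i * (Γ (i + 1) : Set G))
    (η : G → Fin 2)
    (hToe : ∀ g : G, ∃ n, g ∈ Per η (Γ n))
    (hJper : ∀ n : ℕ, J n ⊆ Per η (Γ (n + 1)) \ Per η (Γ n))
    (S L : ℝ)
    (hS : HasSum (fun j : ℕ => ((D (j + 1)).card : ℝ) / ((D (j + 2)).card : ℝ)) S)
    (hL : L = 1 / ((D 1).card : ℝ) + S)
    (hsmall : 1 - Real.exp (-(2 * L)) < 1 / 4)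
    (d : ℝ)
    (hd : Tendsto
      (fun n => (Nat.card ((D n : Set G) ∩ Per η (Γ n) : Set G) : ℝ) / ((D n).card : ℝ))
      atTop (𝓝 d)) :
    d ≤ 1 - Real.exp (-(2 * L)) ∧ d < 1 - d ∧ d < 1 := by
  classical
  have hDpos : ∀ n, 0 < (D n).card := fun n => Finset.card_pos.mpr ⟨1, hDone n⟩
  have hJsub : ∀ i, J i ⊆ (D i : Set G) := by
    intro i
    rw [hJ i]; exact Set.diff_subset
  -- uniqueness of representatives
  have huniq : ∀ m, ∀ x ∈ D m, ∀ y ∈ D m, x⁻¹ * y ∈ Γ m → x = y := by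
    intro m x hx y hy h
    obtain ⟨c, -, hu⟩ := hfund m x
    have h1 := hu x ⟨hx, by simpa using (Γ m).one_mem⟩
    have h2 := hu y ⟨hy, h⟩
    exact h1.trans h2.symm
  -- decomposition of elements of D n
  have hdecomp : ∀ m n, m ≤ n → ∀ g ∈ D n,
      ∃ v e : G, v ∈ D n ∧ v ∈ Γ m ∧ e ∈ D m ∧ g = v * e := by
    intro m n hmn g hg
    rcases eq_or_lt_of_le hmn with rfl | hlt
    · exact ⟨1, g, hDone m, (Γ m).one_mem, hg, (one_mul g).symm⟩
    · have hg' : g ∈ (D n : Set G) := hg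
      rw [hcompat m n hlt] at hg'
      simp only [Set.mem_iUnion, Set.mem_inter_iff, Set.mem_smul_set] at hg'
      obtain ⟨v, ⟨hv1, hv2⟩, e, he, hde⟩ := hg'
      exact ⟨v, e, hv1, hv2, he, by rw [← hde, smul_eq_mul]⟩
  -- counting: |V| * |D m| = |D n| for m ≤ n, where V = D n ∩ Γ m
  have hcover : ∀ m n, m ≤ n →
      ((D n).filter (fun v => v ∈ Γ m)).card * (D m).card = (D n).card := by
    intro m n hmn
    rcases eq_or_lt_of_le hmn with rfl | hlt
    · have hfe : (D m).filter (fun v => v ∈ Γ m) = {1} := by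
        ext v
        simp only [Finset.mem_filter, Finset.mem_singleton]
        constructor
        · rintro ⟨hv, hvΓ⟩
          exact (huniq m 1 (hDone m) v hv (by simpa using hvΓ)).symm
        · rintro rfl; exact ⟨hDone m, (Γ m).one_mem⟩
      rw [hfe]; simp
    · rw [← Finset.card_product]
      apply Finset.card_bij (fun (p : G × G) _ => p.1 * p.2)
      · rintro ⟨v, e⟩ hp
        rw [Finset.mem_product] at hp
        obtain ⟨hv, he⟩ := hp
        rw [Finset.mem_filter] at hv
        have : v * e ∈ (D n : Set G) := by
          rw [hcompat m n hlt]
          simp only [Set.mem_iUnion, Set.mem_inter_iff, Set.mem_smul_set]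
          exact ⟨v, ⟨hv.1, hv.2⟩, e, he, by simp⟩
        exact this
      · rintro ⟨v, e⟩ hp ⟨v', e'⟩ hp' heq
        rw [Finset.mem_product, Finset.mem_filter] at hp hp'
        simp only at heq
        have he' : e' = v'⁻¹ * (v * e) := by rw [heq]; group
        have hmem : e⁻¹ * e' ∈ Γ m := by
          have hγ : v'⁻¹ * v ∈ Γ m := (Γ m).mul_mem ((Γ m).inv_mem hp'.1.2) hp.1.2
          have hc := (hnorm m).conj_mem _ hγ e⁻¹
          have heq2 : e⁻¹ * e' = e⁻¹ * (v'⁻¹ * v) * e⁻¹⁻¹ := by rw [he']; group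
          rw [heq2]; exact hc
        have hee : e = e' := huniq m e hp.2 e' hp'.2 hmem
        subst hee
        have hvv : v = v' := mul_right_cancel heq
        simp [hvv]
      · intro g hg
        obtain ⟨v, e, hv1, hv2, he, rfl⟩ := hdecomp m n (le_of_lt hlt) g hg
        exact ⟨(v, e), by
          rw [Finset.mem_product, Finset.mem_filter]
          exact ⟨⟨hv1, hv2⟩, he⟩, rfl⟩
  -- counting bound for J i * Γ (i+1) inside D n
  have hFJ : ∀ i n, i < n →
      ((D n).filter (fun g => g ∈ J i * (Γ (i + 1) : Set G))).card * (D (i + 1)).card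
        ≤ (D i).card * (D n).card := by
    intro i n hin
    set V := (D n).filter (fun v => v ∈ Γ (i + 1)) with hV
    have hcv := hcover (i + 1) n hin
    have hkey : ∀ g ∈ (D n).filter (fun g => g ∈ J i * (Γ (i + 1) : Set G)),
        ∃ p : G × G, p.1 ∈ J i ∧ p.2 ∈ V ∧ g = p.2 * p.1 := by
      intro g hg
      rw [Finset.mem_filter] at hg
      obtain ⟨hgn, hgm⟩ := hg
      rw [Set.mem_mul] at hgm
      obtain ⟨j, hj, γ, hγ, hjγ⟩ := hgm
      obtain ⟨v, e, hv1, hv2, he, hde⟩ := hdecomp (i + 1) n hin g hgn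
      have hjD : j ∈ D (i + 1) := hDmono i (hJsub i hj)
      have hveq : v * e = j * γ := by rw [← hde, hjγ]
      have he2 : e = v⁻¹ * (j * γ) := by rw [← hveq]; group
      have hej : e = j := by
        refine (huniq (i + 1) j hjD e he ?_).symm
        have hconj : j⁻¹ * v⁻¹ * j ∈ Γ (i + 1) := by
          have hc := (hnorm (i + 1)).conj_mem _ ((Γ (i + 1)).inv_mem hv2) j⁻¹
          simpa [mul_assoc] using hc
        have heq3 : j⁻¹ * e = (j⁻¹ * v⁻¹ * j) * γ := by rw [he2]; group
        rw [heq3]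
        exact (Γ (i + 1)).mul_mem hconj hγ
      refine ⟨(j, v), hj, ?_, ?_⟩
      · rw [hV, Finset.mem_filter]; exact ⟨hv1, hv2⟩
      · rw [hde, hej]
    have hcard : ((D n).filter (fun g => g ∈ J i * (Γ (i + 1) : Set G))).card
        ≤ ((D i) ×ˢ V).card := by
      apply Finset.card_le_card_of_injOn
        (fun g => if h : ∃ p : G × G, p.1 ∈ J i ∧ p.2 ∈ V ∧ g = p.2 * p.1
          then h.choose else (1, 1))
      · intro g hg
        have h := hkey g hg
        simp only [Finset.mem_coe]
        rw [dif_pos h, Finset.mem_product]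
        obtain ⟨h1, h2, -⟩ := h.choose_spec
        exact ⟨hJsub i h1, h2⟩
      · intro g hg g' hg' heq
        have h := hkey g (Finset.mem_coe.mp hg)
        have h' := hkey g' (Finset.mem_coe.mp hg')
        simp only at heq
        rw [dif_pos h, dif_pos h'] at heq
        have e1 := h.choose_spec.2.2
        have e2 := h'.choose_spec.2.2
        rw [e1, e2, heq]
    calc ((D n).filter (fun g => g ∈ J i * (Γ (i + 1) : Set G))).card * (D (i + 1)).card
        ≤ ((D i) ×ˢ V).card * (D (i + 1)).card := Nat.mul_le_mul_right _ hcard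
      _ = (D i).card * (V.card * (D (i + 1)).card) := by
          rw [Finset.card_product, mul_assoc]
      _ = (D i).card * (D n).card := by rw [hcv]
  -- the periodic part of D n is covered by the J i * Γ (i+1)
  have hsubU : ∀ n, (D n).filter (fun g => g ∈ Per η (Γ n)) ⊆
      (Finset.range n).biUnion
        (fun i => (D n).filter (fun g => g ∈ J i * (Γ (i + 1) : Set G))) := by
    intro n g hg
    rw [Finset.mem_filter] at hg
    obtain ⟨hgn, hgp⟩ := hg
    by_contra hcon
    have hnot : g ∉ ⋃ i ∈ Finset.range n, J i * (Γ (i + 1) : Set G) := by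
      intro hmem
      apply hcon
      simp only [Set.mem_iUnion] at hmem
      obtain ⟨i, hi, hgi⟩ := hmem
      exact Finset.mem_biUnion.mpr ⟨i, hi, Finset.mem_filter.mpr ⟨hgn, hgi⟩⟩
    have hgJ : g ∈ J n := by rw [hJ n]; exact ⟨hgn, hnot⟩
    exact (hJper n hgJ).2 hgp
  -- partial sums are bounded by L
  have hxnn : ∀ i : ℕ, (0 : ℝ) ≤ ((D i).card : ℝ) / ((D (i + 1)).card : ℝ) := by
    intro i; exact div_nonneg (Nat.cast_nonneg _) (Nat.cast_nonneg _)
  have hSnn : ∀ m : ℕ, ∑ j ∈ Finset.range m,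
      ((D (j + 1)).card : ℝ) / ((D (j + 2)).card : ℝ) ≤ S :=
    fun m => sum_le_hasSum _ (fun j _ => div_nonneg (Nat.cast_nonneg _) (Nat.cast_nonneg _)) hS
  have hLsum : ∀ n, ∑ i ∈ Finset.range n,
      ((D i).card : ℝ) / ((D (i + 1)).card : ℝ) ≤ L := by
    intro n
    have h1 : ∑ i ∈ Finset.range n, ((D i).card : ℝ) / ((D (i + 1)).card : ℝ)
        ≤ ∑ i ∈ Finset.range (n + 1), ((D i).card : ℝ) / ((D (i + 1)).card : ℝ) :=
      Finset.sum_le_sum_of_subset_of_nonneg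
        (Finset.range_subset_range.mpr (Nat.le_succ n)) (fun i _ _ => hxnn i)
    have h2 : ∑ i ∈ Finset.range (n + 1), ((D i).card : ℝ) / ((D (i + 1)).card : ℝ)
        = (∑ j ∈ Finset.range n, ((D (j + 1)).card : ℝ) / ((D (j + 2)).card : ℝ))
          + ((D 0).card : ℝ) / ((D 1).card : ℝ) := by
      rw [Finset.sum_range_succ']
    have h3 : ((D 0).card : ℝ) = 1 := by rw [hD0]; simp
    have h4 := hSnn n
    rw [hL]
    rw [h2, h3] at h1
    calc ∑ i ∈ Finset.range n, ((D i).card : ℝ) / ((D (i + 1)).card : ℝ)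
        ≤ (∑ j ∈ Finset.range n, ((D (j + 1)).card : ℝ) / ((D (j + 2)).card : ℝ))
          + 1 / ((D 1).card : ℝ) := h1
      _ ≤ S + 1 / ((D 1).card : ℝ) := by linarith
      _ = 1 / ((D 1).card : ℝ) + S := by ring
  -- d ≤ L
  have hdL : d ≤ L := by
    apply le_of_tendsto' hd
    intro n
    have hcardeq : (Nat.card ((D n : Set G) ∩ Per η (Γ n) : Set G))
        = ((D n).filter (fun g => g ∈ Per η (Γ n))).card := by
      have hset : ((D n : Set G) ∩ Per η (Γ n))
          = (((D n).filter (fun g => g ∈ Per η (Γ n))) : Finset G) := by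
        ext g
        simp [Set.mem_inter_iff, Finset.mem_coe, Finset.mem_filter]
      rw [Nat.card_coe_set_eq, hset, Set.ncard_coe_finset]
    have hDn : (0 : ℝ) < ((D n).card : ℝ) := by exact_mod_cast hDpos n
    have h1 : (((D n).filter (fun g => g ∈ Per η (Γ n))).card : ℝ)
        ≤ ∑ i ∈ Finset.range n,
          ((((D n).filter (fun g => g ∈ J i * (Γ (i + 1) : Set G))).card : ℝ)) := by
      have ha := Finset.card_le_card (hsubU n)
      have hb := Finset.card_biUnion_le (s := Finset.range n)
        (t := fun i => (D n).filter (fun g => g ∈ J i * (Γ (i + 1) : Set G)))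
      exact_mod_cast le_trans ha hb
    have h3 : ∀ i ∈ Finset.range n,
        ((((D n).filter (fun g => g ∈ J i * (Γ (i + 1) : Set G))).card : ℝ))
          / ((D n).card : ℝ)
        ≤ ((D i).card : ℝ) / ((D (i + 1)).card : ℝ) := by
      intro i hi
      have hDi : (0 : ℝ) < ((D (i + 1)).card : ℝ) := by exact_mod_cast hDpos (i + 1)
      rw [div_le_div_iff₀ hDn hDi]
      exact_mod_cast hFJ i n (Finset.mem_range.mp hi)
    calc (Nat.card ((D n : Set G) ∩ Per η (Γ n) : Set G) : ℝ) / ((D n).card : ℝ)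
        = (((D n).filter (fun g => g ∈ Per η (Γ n))).card : ℝ) / ((D n).card : ℝ) := by
          rw [hcardeq]
      _ ≤ (∑ i ∈ Finset.range n,
            ((((D n).filter (fun g => g ∈ J i * (Γ (i + 1) : Set G))).card : ℝ)))
            / ((D n).card : ℝ) := div_le_div_of_nonneg_right h1 hDn.le
      _ = ∑ i ∈ Finset.range n,
            ((((D n).filter (fun g => g ∈ J i * (Γ (i + 1) : Set G))).card : ℝ))
            / ((D n).card : ℝ) := Finset.sum_div _ _ _
      _ ≤ ∑ i ∈ Finset.range n, ((D i).card : ℝ) / ((D (i + 1)).card : ℝ) :=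
          Finset.sum_le_sum h3
      _ ≤ L := hLsum n
  -- L ≤ 1 - exp (-(2L))
  have hL0 : 0 ≤ L := by
    have hS0 : 0 ≤ S := by simpa using hSnn 0
    have h1 : (0 : ℝ) ≤ 1 / ((D 1).card : ℝ) := div_nonneg zero_le_one (Nat.cast_nonneg _)
    rw [hL]; linarith
  have hexp : Real.exp (-(2 * L)) ≤ 1 - L := by
    have h34 : (3 : ℝ) / 4 < Real.exp (-(2 * L)) := by linarith
    have hhalf : L < 1 / 2 := by
      by_contra hcon
      push_neg at hcon
      have hle : Real.exp (-(2 * L)) ≤ Real.exp (-1) :=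
        Real.exp_le_exp.mpr (by linarith)
      have he1 : Real.exp (-1) < 3 / 4 := by
        rw [Real.exp_neg]
        have h43 : (4 : ℝ) / 3 < Real.exp 1 :=
          lt_trans (by norm_num) Real.exp_one_gt_d9
        have hpos : (0 : ℝ) < 4 / 3 := by norm_num
        have := one_div_lt_one_div_of_lt hpos h43
        rw [one_div, one_div] at this
        calc (Real.exp 1)⁻¹ < ((4 : ℝ) / 3)⁻¹ := this
          _ = 3 / 4 := by norm_num
      linarith
    have hmono := Real.add_one_le_exp (2 * L)
    have hprod : Real.exp (-(2 * L)) * Real.exp (2 * L) = 1 := by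
      rw [← Real.exp_add]; simp
    nlinarith [Real.exp_pos (2 * L), Real.exp_pos (-(2 * L)),
      mul_le_mul_of_nonneg_left hmono (le_of_lt (Real.exp_pos (-(2 * L))))]
  have hbound : d ≤ 1 - Real.exp (-(2 * L)) := le_trans hdL (by linarith)
  have hd4 : d < 1 / 4 := lt_of_le_of_lt hbound hsmall
  exact ⟨hbound, by linarith, by linarith⟩
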